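/- Let ℓ ∈ ℕ, let m be a multi-set of segments of integers all of length ℓ, with ≤_b-minimal element Δ, and write m = Σ_{n=0}^N a_n {ν^n Δ}. Define b_0 = a_0 and b_n = Σ_{i=0}^n (−1)^{n−i} a_i. If m is of Speh type, then b_n ≥ 0 for all 0 ≤ n ≤ N, b_N = 0, and m = Σ_{n=0}^{N−1} b_n ({ν^n Δ} + {ν^{n+1} Δ}). -/

import Mathlib

/-- A segment of integers `[a,b] = {a, a+1, ..., b}` with `a ≤ b`. -/
structure Seg where
  a : ℤ
  b : ℤ
  le : a ≤ b

noncomputable instance : DecidableEq Seg := Classical.decEq _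

/-- The shift `ν[a,b] = [a+1,b+1]`. -/
def Seg.nu (Δ : Seg) : Seg := ⟨Δ.a + 1, Δ.b + 1, by have := Δ.le; omega⟩

/-- `Δ ≺ Δ'` : `Δ` precedes `Δ'`. -/
def Seg.prec (Δ Δ' : Seg) : Prop := Δ.a < Δ'.a ∧ Δ.b < Δ'.b ∧ Δ'.a - 1 ≤ Δ.b

/-- A multi-set of segments is of Speh type if `m = n + νn` for some multi-set `n`. -/
def SpehType (m : Multiset Seg) : Prop := ∃ n : Multiset Seg, m = n + n.map Seg.nu

/-- The order `≤_b` on segments: by beginning, then by end. -/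
def Seg.leB (Δ Δ' : Seg) : Prop := Δ.a < Δ'.a ∨ (Δ.a = Δ'.a ∧ Δ.b ≤ Δ'.b)

/-- The partial alternating sums `b_n = Σ_{i=0}^n (−1)^{n−i} a_i`. -/
def altB (a : ℕ → ℕ) (n : ℕ) : ℤ := ∑ i ∈ Finset.range (n + 1), (-1 : ℤ) ^ (n - i) * (a i : ℤ)

lemma Seg.ext' {Δ Δ' : Seg} (ha : Δ.a = Δ'.a) (hb : Δ.b = Δ'.b) : Δ = Δ' := by
  cases Δ; cases Δ'; simp_all

lemma Seg.nu_inj : Function.Injective Seg.nu := by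
  intro x y h
  have ha : x.nu.a = y.nu.a := by rw [h]
  have hb : x.nu.b = y.nu.b := by rw [h]
  simp [Seg.nu] at ha hb
  exact Seg.ext' ha hb

lemma nu_iter_a (Δ : Seg) (k : ℕ) : (Seg.nu^[k] Δ).a = Δ.a + k := by
  induction k with
  | zero => simp
  | succ n ih => rw [Function.iterate_succ_apply']; simp [Seg.nu, ih]; push_cast; ring

lemma nu_iter_injN (Δ : Seg) {j k : ℕ} (h : Seg.nu^[j] Δ = Seg.nu^[k] Δ) : j = k := by
  have := congrArg Seg.a h
  rw [nu_iter_a, nu_iter_a] at this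
  omega

lemma altB_succ (a : ℕ → ℕ) (n : ℕ) : altB a (n + 1) = (a (n + 1) : ℤ) - altB a n := by
  rw [altB, Finset.sum_range_succ]
  simp only [Nat.sub_self, pow_zero, one_mul]
  have : ∀ i ∈ Finset.range (n + 1), (-1:ℤ) ^ (n + 1 - i) * (a i : ℤ) = -((-1:ℤ) ^ (n - i) * (a i : ℤ)) := by
    intro i hi
    rw [Finset.mem_range] at hi
    have h2 : n + 1 - i = (n - i) + 1 := by omega
    rw [h2, pow_succ]; ring
  rw [Finset.sum_congr rfl this, Finset.sum_neg_distrib, altB]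
  ring

/-- in the setting of a multi-set `m = Σ_{n=0}^N a_n {ν^n Δ}` of segments of
constant length `ℓ` with `≤_b`-minimal element `Δ`, if `m` is of Speh type then
`b_n ≥ 0` for all `n ≤ N`, `b_N = 0`, and `m = Σ_{n=0}^{N−1} b_n ({ν^nΔ} + {ν^{n+1}Δ})`. -/
theorem speh_partial_sums (ℓ : ℕ) (m : Multiset Seg) (Δ : Seg)
    (hlen : ∀ Δ' ∈ m, Δ'.b - Δ'.a + 1 = (ℓ : ℤ))
    (hmem : Δ ∈ m) (hmin : ∀ Δ' ∈ m, Δ.leB Δ')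
    (N : ℕ) (a : ℕ → ℕ) (ha0 : 1 ≤ a 0)
    (hsum : m = ∑ n ∈ Finset.range (N + 1), a n • ({Seg.nu^[n] Δ} : Multiset Seg))
    (hSpeh : SpehType m) :
    (∀ n ≤ N, 0 ≤ altB a n) ∧ altB a N = 0 ∧
      m = ∑ n ∈ Finset.range N,
        (altB a n).toNat • (({Seg.nu^[n] Δ} + {Seg.nu^[n + 1] Δ}) : Multiset Seg) := by
  classical
  obtain ⟨t, ht⟩ := hSpeh
  -- count of ν^k Δ in m
  have hcount_m : ∀ k : ℕ, m.count (Seg.nu^[k] Δ) = if k ≤ N then a k else 0 := by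
    intro k
    rw [hsum, Multiset.count_sum']
    have : ∀ n ∈ Finset.range (N + 1),
        Multiset.count (Seg.nu^[k] Δ) (a n • ({Seg.nu^[n] Δ} : Multiset Seg))
          = if n = k then a k else 0 := by
      intro n _
      rw [Multiset.count_nsmul, Multiset.count_singleton]
      split_ifs with h1 h2 h2
      · subst h2; simp
      · exact absurd (nu_iter_injN Δ h1).symm h2
      · exact absurd (h2 ▸ rfl) h1
      · simp
    rw [Finset.sum_congr rfl this, Finset.sum_ite_eq' (Finset.range (N+1)) k fun _ => a k]
    simp [Nat.lt_succ_iff]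
  set c : ℕ → ℕ := fun k => t.count (Seg.nu^[k] Δ) with hc
  have htm : t ≤ m := ht ▸ Multiset.le_add_right _ _
  -- count of ν^k Δ in the ν-shift of t
  have hmapcount : ∀ k : ℕ, (t.map Seg.nu).count (Seg.nu^[k+1] Δ) = c k := by
    intro k
    rw [Function.iterate_succ_apply' Seg.nu k Δ]
    exact Multiset.count_map_eq_count' Seg.nu t Seg.nu_inj _
  have hmapzero : (t.map Seg.nu).count Δ = 0 := by
    rw [Multiset.count_eq_zero]
    intro hΔ
    obtain ⟨Δ'', h'', heq⟩ := Multiset.mem_map.mp hΔ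
    have := hmin Δ'' (Multiset.mem_of_le htm h'')
    have ha : Δ.a = Δ''.a + 1 := by rw [← heq]; rfl
    rcases this with h | ⟨h, _⟩ <;> omega
  have hcm : ∀ k : ℕ, m.count (Seg.nu^[k] Δ) = c k + (if k = 0 then 0 else c (k - 1)) := by
    intro k
    rw [ht, Multiset.count_add]
    cases k with
    | zero => simp [hmapzero, hc]
    | succ n =>
      rw [hmapcount n, if_neg (Nat.succ_ne_zero n), Nat.add_sub_cancel]
  -- c N = 0
  have hcN : c N = 0 := by
    have h1 := hcm (N + 1)
    rw [hcount_m (N + 1)] at h1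
    simp at h1
    omega
  -- a recurrences
  have ha_succ : ∀ k, k + 1 ≤ N → a (k + 1) = c (k + 1) + c k := by
    intro k hk
    have h1 := hcm (k + 1)
    rw [hcount_m (k + 1), if_pos hk] at h1
    simpa using h1
  have ha_zero : a 0 = c 0 := by
    have h1 := hcm 0
    rw [hcount_m 0, if_pos (Nat.zero_le N)] at h1
    simpa using h1
  -- altB a n = c n for n ≤ N
  have haltB : ∀ n ≤ N, altB a n = (c n : ℤ) := by
    intro n
    induction n with
    | zero => intro _; simp [altB, ha_zero]
    | succ k ih =>
      intro hk
      rw [altB_succ, ih (by omega), ha_succ k hk]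
      push_cast
      ring
  refine ⟨fun n hn => by rw [haltB n hn]; positivity, by rw [haltB N le_rfl, hcN]; rfl, ?_⟩
  -- every element of t is ν^k Δ for some k < N
  have hmemt : ∀ Δ' ∈ t, ∃ k < N, Δ' = Seg.nu^[k] Δ := by
    intro Δ' h'
    have hm' : Δ' ∈ m := Multiset.mem_of_le htm h'
    rw [hsum] at hm'
    obtain ⟨n, hn, hmem'⟩ := Multiset.mem_sum.mp hm'
    rw [Finset.mem_range] at hn
    rw [Multiset.mem_nsmul] at hmem'
    · have heq : Δ' = Seg.nu^[n] Δ := Multiset.mem_singleton.mp hmem'.2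
      rcases Nat.lt_or_ge n N with h | h
      · exact ⟨n, h, heq⟩
      · -- n = N, but then count in t is c N = 0, contradiction
        have hnN : n = N := by omega
        exfalso
        have : c N ≠ 0 := by
          rw [hc]
          simp only [ne_eq, Multiset.count_eq_zero, not_not]
          rw [← hnN, ← heq]; exact h'
        exact this hcN
  -- t = Σ_{k<N} c k • {ν^k Δ}
  have ht_eq : t = ∑ n ∈ Finset.range N, c n • ({Seg.nu^[n] Δ} : Multiset Seg) := by
    ext x
    rw [Multiset.count_sum']
    have hterm : ∀ n ∈ Finset.range N,
        Multiset.count x (c n • ({Seg.nu^[n] Δ} : Multiset Seg))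
          = if x = Seg.nu^[n] Δ then c n else 0 := by
      intro n _
      rw [Multiset.count_nsmul, Multiset.count_singleton]
      split_ifs <;> simp
    rw [Finset.sum_congr rfl hterm]
    by_cases hx : ∃ k < N, x = Seg.nu^[k] Δ
    · obtain ⟨k, hk, rfl⟩ := hx
      have hterm2 : ∀ n ∈ Finset.range N,
          (if Seg.nu^[k] Δ = Seg.nu^[n] Δ then c n else 0) = if n = k then c k else 0 := by
        intro n _
        split_ifs with h1 h2 h2
        · rw [h2]
        · exact absurd (nu_iter_injN Δ h1).symm h2
        · subst h2; exact absurd rfl h1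
        · rfl
      rw [Finset.sum_congr rfl hterm2,
        Finset.sum_ite_eq' (Finset.range N) k fun _ => c k,
        if_pos (Finset.mem_range.mpr hk)]
    · push_neg at hx
      rw [Multiset.count_eq_zero.mpr (fun hxt => ?_), Finset.sum_eq_zero ?_]
      · intro n hn
        rw [Finset.mem_range] at hn
        rw [if_neg (hx n hn)]
      · obtain ⟨k, hk, heq⟩ := hmemt x hxt
        exact hx k hk heq
  -- conclude
  have hmap_eq : t.map Seg.nu
      = ∑ n ∈ Finset.range N, c n • ({Seg.nu^[n+1] Δ} : Multiset Seg) := by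
    have hms := map_sum (Multiset.mapAddMonoidHom Seg.nu)
      (fun n => c n • ({Seg.nu^[n] Δ} : Multiset Seg)) (Finset.range N)
    simp only [← Multiset.coe_mapAddMonoidHom Seg.nu]
    rw [ht_eq]
    show (Multiset.mapAddMonoidHom Seg.nu) _ = _
    rw [hms]
    apply Finset.sum_congr rfl
    intro n _
    show Multiset.map Seg.nu (c n • {Seg.nu^[n] Δ}) = _
    rw [Multiset.map_nsmul, Multiset.map_singleton, ← Function.iterate_succ_apply' Seg.nu n Δ]
  rw [ht, hmap_eq, ht_eq, ← Finset.sum_add_distrib]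
  apply Finset.sum_congr rfl
  intro n hn
  rw [Finset.mem_range] at hn
  rw [haltB n (by omega), Int.toNat_natCast, smul_add]
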